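/- Let M be a right R-module. The following are equivalent: (1) M is an SIP module; (2) for every split monomorphism f: A → M where A is a direct summand of M, the submodule A ∩ f(A) is a direct summand of M; (3) for every split epimorphism f: M → M/A where A is a direct summand of M, the submodule A ∩ Ker(f) is a direct summand of M. -/

import Mathlib

universe u v w

section Defs

variable {S : Type u} [Ring S]

/-- A submodule `A` is a direct summand of `M`. -/
def IsDirectSummand {M : Type v} [AddCommGroup M] [Module S M] (A : Submodule S M) : Prop :=
  ∃ B : Submodule S M, A ⊓ B = ⊥ ∧ A ⊔ B = ⊤

/-- `A` is an essential submodule of `B`. -/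
def IsEssentialIn {M : Type v} [AddCommGroup M] [Module S M] (A B : Submodule S M) : Prop :=
  A ≤ B ∧ ∀ K : Submodule S M, K ≤ B → K ≠ ⊥ → A ⊓ K ≠ ⊥

/-- `A` is essential in some direct summand of `M`. -/
def EssentialInSummand {M : Type v} [AddCommGroup M] [Module S M] (A : Submodule S M) : Prop :=
  ∃ D : Submodule S M, IsDirectSummand D ∧ IsEssentialIn A D

/-- `A` is a small (superfluous) submodule of `M`. -/
def IsSmallSubmodule {M : Type v} [AddCommGroup M] [Module S M] (A : Submodule S M) : Prop :=
  ∀ K : Submodule S M, A ⊔ K = ⊤ → K = ⊤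

/-- `A` lies above the direct summand `D` of `M`, i.e. `D ≤ A` and `A/D` is small in `M/D`. -/
def LiesAbove {M : Type v} [AddCommGroup M] [Module S M] (A D : Submodule S M) : Prop :=
  IsDirectSummand D ∧ D ≤ A ∧ IsSmallSubmodule (Submodule.map D.mkQ A)

/-- `A` lies above some direct summand of `M`. -/
def LiesAboveSummand {M : Type v} [AddCommGroup M] [Module S M] (A : Submodule S M) : Prop :=
  ∃ D : Submodule S M, LiesAbove A D

end Defs

section ModDefs

variable (S : Type u) [Ring S]

/-- SSP: the sum of any two direct summands is a direct summand. -/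
def HasSSP (M : Type v) [AddCommGroup M] [Module S M] : Prop :=
  ∀ A B : Submodule S M, IsDirectSummand A → IsDirectSummand B → IsDirectSummand (A ⊔ B)

/-- SIP: the intersection of any two direct summands is a direct summand. -/
def HasSIP (M : Type v) [AddCommGroup M] [Module S M] : Prop :=
  ∀ A B : Submodule S M, IsDirectSummand A → IsDirectSummand B → IsDirectSummand (A ⊓ B)

/-- SIP-CS: the intersection of any finite family of direct summands is essential in a
direct summand. -/
def IsSIPCS (M : Type v) [AddCommGroup M] [Module S M] : Prop :=
  ∀ (ι : Type) [Fintype ι] (A : ι → Submodule S M),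
    (∀ i, IsDirectSummand (A i)) → EssentialInSummand (⨅ i, A i)

/-- SSP-lifting: if each member of a finite family of submodules lies above a direct summand,
then their sum lies above a direct summand. -/
def IsSSPLifting (M : Type v) [AddCommGroup M] [Module S M] : Prop :=
  ∀ (ι : Type) [Fintype ι] (A : ι → Submodule S M),
    (∀ i, LiesAboveSummand (A i)) → LiesAboveSummand (⨆ i, A i)

/-- C2 condition: every submodule isomorphic to a direct summand is a direct summand. -/
def HasC2 (M : Type v) [AddCommGroup M] [Module S M] : Prop :=
  ∀ A B : Submodule S M, IsDirectSummand B → Nonempty (A ≃ₗ[S] B) → IsDirectSummand A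

/-- C3 condition: the sum of two direct summands with zero intersection is a direct summand. -/
def HasC3 (M : Type v) [AddCommGroup M] [Module S M] : Prop :=
  ∀ A B : Submodule S M, IsDirectSummand A → IsDirectSummand B → A ⊓ B = ⊥ →
    IsDirectSummand (A ⊔ B)

/-- D2 condition: if `M/A` is isomorphic to a direct summand of `M` then `A` is a direct
summand. -/
def HasD2 (M : Type v) [AddCommGroup M] [Module S M] : Prop :=
  ∀ A : Submodule S M, (∃ B : Submodule S M, IsDirectSummand B ∧
    Nonempty ((M ⧸ A) ≃ₗ[S] B)) → IsDirectSummand A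

/-- D3 condition: if two direct summands sum to `M`, their intersection is a direct summand. -/
def IsD3Module (M : Type v) [AddCommGroup M] [Module S M] : Prop :=
  ∀ A B : Submodule S M, IsDirectSummand A → IsDirectSummand B → A ⊔ B = ⊤ →
    IsDirectSummand (A ⊓ B)

/-- `M` is relatively CS-Rickart to `N`. -/
def RelCSRickart (M : Type v) (N : Type w) [AddCommGroup M] [Module S M]
    [AddCommGroup N] [Module S N] : Prop :=
  ∀ φ : M →ₗ[S] N, EssentialInSummand (LinearMap.ker φ)

/-- `M` is relatively d-CS-Rickart to `N`. -/
def RelDCSRickart (M : Type v) (N : Type w) [AddCommGroup M] [Module S M]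
    [AddCommGroup N] [Module S N] : Prop :=
  ∀ φ : N →ₗ[S] M, LiesAboveSummand (LinearMap.range φ)

/-- CS-Rickart module. -/
def IsCSRickart (M : Type v) [AddCommGroup M] [Module S M] : Prop :=
  RelCSRickart S M M

/-- d-CS-Rickart module. -/
def IsDCSRickart (M : Type v) [AddCommGroup M] [Module S M] : Prop :=
  RelDCSRickart S M M

/-- `M` has an `Ω`-cover, where `Ω` is the class of modules satisfying `P`. -/
def HasCover (P : ModuleCat.{v} S → Prop) (M : Type v) [AddCommGroup M] [Module S M] : Prop :=
  ∃ (E : ModuleCat.{v} S) (g : E →ₗ[S] M), P E ∧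
    (∀ (E' : ModuleCat.{v} S), P E' → ∀ g' : E' →ₗ[S] M,
      ∃ h : E' →ₗ[S] E, g ∘ₗ h = g') ∧
    (∀ h : E →ₗ[S] E, g ∘ₗ h = g → Function.Bijective h)

/-- `M` has an `Ω`-envelope, where `Ω` is the class of modules satisfying `P`. -/
def HasEnvelope (P : ModuleCat.{v} S → Prop) (M : Type v) [AddCommGroup M] [Module S M] : Prop :=
  ∃ (E : ModuleCat.{v} S) (g : M →ₗ[S] E), P E ∧
    (∀ (E' : ModuleCat.{v} S), P E' → ∀ g' : M →ₗ[S] E',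
      ∃ h : E →ₗ[S] E', h ∘ₗ g = g') ∧
    (∀ h : E →ₗ[S] E, h ∘ₗ g = g → Function.Bijective h)

/-- `M` is 2-generated. -/
def TwoGenerated (M : Type v) [AddCommGroup M] [Module S M] : Prop :=
  ∃ a b : M, Submodule.span S ({a, b} : Set M) = ⊤

/-- `M` is finitely cogenerated. -/
def FinitelyCogenerated (M : Type v) [AddCommGroup M] [Module S M] : Prop :=
  ∀ 𝒜 : Set (Submodule S M), sInf 𝒜 = ⊥ →
    ∃ ℬ ⊆ 𝒜, ℬ.Finite ∧ sInf ℬ = ⊥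

/-- The socle of `M`: the sum of all simple submodules. -/
def SocleOf (M : Type v) [AddCommGroup M] [Module S M] : Submodule S M :=
  sSup {A : Submodule S M | IsSimpleModule S ↥A}

/-- An indecomposable module: nonzero, and its only direct summands are `0` and itself. -/
def IsIndecomposable (M : Type v) [AddCommGroup M] [Module S M] : Prop :=
  (⊤ : Submodule S M) ≠ ⊥ ∧
    ∀ A : Submodule S M, IsDirectSummand A → A = ⊥ ∨ A = ⊤

end ModDefs

section RingDefs

variable (R : Type u) [Ring R]

/-- The right annihilator of an element of a right `R`-module, as a right ideal of `R`. -/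
def rightAnnihilator {M : Type v} [AddCommGroup M] [Module Rᵐᵒᵖ M] (m : M) :
    Submodule Rᵐᵒᵖ R where
  carrier := {r : R | MulOpposite.op r • m = 0}
  add_mem' := by
    intro a b ha hb
    simp only [Set.mem_setOf_eq] at *
    rw [MulOpposite.op_add, add_smul, ha, hb, add_zero]
  zero_mem' := by simp
  smul_mem' := by
    intro c x hx
    simp only [Set.mem_setOf_eq] at *
    have : MulOpposite.op (c • x) = c * MulOpposite.op x := by
      rw [MulOpposite.smul_eq_mul_unop]
      simp [MulOpposite.op_mul]
    rw [this, mul_smul, hx, smul_zero]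

/-- `M` is a nonsingular right `R`-module. -/
def IsNonsingular (M : Type v) [AddCommGroup M] [Module Rᵐᵒᵖ M] : Prop :=
  ∀ m : M, IsEssentialIn (rightAnnihilator R m) (⊤ : Submodule Rᵐᵒᵖ R) → m = 0

/-- `R` is a right V-ring: every simple right `R`-module is injective. -/
def IsRightVRing : Prop :=
  ∀ (N : Type u) [AddCommGroup N] [Module Rᵐᵒᵖ N],
    IsSimpleModule Rᵐᵒᵖ N → Module.Injective Rᵐᵒᵖ N

/-- `R` is semiregular: `R/J(R)` is von Neumann regular and idempotents lift modulo `J(R)`. -/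
def IsSemiregularRing : Prop :=
  (∀ a : R, ∃ b : R, a - a * b * a ∈ Ideal.jacobson (⊥ : Ideal R) ∧ b = b * a * b) ∧
  (∀ a : R, a * a - a ∈ Ideal.jacobson (⊥ : Ideal R) →
    ∃ e : R, e * e = e ∧ e - a ∈ Ideal.jacobson (⊥ : Ideal R))

end RingDefs

section AuxSIP

variable {S : Type u} [Ring S] {M : Type v} [AddCommGroup M] [Module S M]

/-- range and kernel of an idempotent are complementary. -/
lemma idem_compl {e : M →ₗ[S] M} (he : ∀ x, e (e x) = e x) :
    LinearMap.range e ⊓ LinearMap.ker e = ⊥ ∧ LinearMap.range e ⊔ LinearMap.ker e = ⊤ := by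
  constructor
  · apply eq_bot_iff.mpr
    rintro x ⟨⟨y, rfl⟩, hk⟩
    have hk' : e (e y) = 0 := hk
    rw [Submodule.mem_bot, ← he y]; exact hk'
  · apply eq_top_iff.mpr
    intro x _
    have hx : x = e x + (x - e x) := by abel
    rw [hx]
    exact Submodule.add_mem_sup ⟨x, rfl⟩ (by simp [LinearMap.mem_ker, he x])

lemma key_lemma (U V : Submodule S M) (p₁ : M →ₗ[S] M)
    (hidem : ∀ x, p₁ (p₁ x) = p₁ x)
    (hker : ∀ x, p₁ x = 0 ↔ x ∈ U)
    (hsub : ∀ x, x - p₁ x ∈ U)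
    (hK : ∃ K' : Submodule S M, (V ⊓ Submodule.comap p₁ V) ⊓ K' = ⊥ ∧
        (V ⊓ Submodule.comap p₁ V) ⊔ K' = ⊤) :
    ∃ W : Submodule S M, (U ⊓ V) ⊓ W = ⊥ ∧ (U ⊓ V) ⊔ W = ⊤ := by
  set K := V ⊓ Submodule.comap p₁ V with hKdef
  obtain ⟨K', hK1, hK2⟩ := hK
  have hUVK : U ⊓ V ≤ K := by
    rintro x ⟨hxU, hxV⟩
    exact ⟨hxV, by simp [Submodule.mem_comap, (hker x).mpr hxU]⟩
  have hmapK : Submodule.map p₁ K ≤ K := by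
    rintro y ⟨k, ⟨hkV, hkp⟩, rfl⟩
    exact ⟨hkp, by simpa [Submodule.mem_comap, hidem k] using hkp⟩
  have hdisj : (U ⊓ V) ⊓ Submodule.map p₁ K = ⊥ := by
    apply eq_bot_iff.mpr
    rintro x ⟨⟨hxU, _⟩, k, _, rfl⟩
    have h0 : p₁ (p₁ k) = 0 := (hker _).mpr hxU
    simpa [hidem k] using h0
  have hsum : (U ⊓ V) ⊔ Submodule.map p₁ K = K := by
    apply le_antisymm (sup_le hUVK hmapK)
    rintro k ⟨hkV, hkp⟩
    have hk : k = (k - p₁ k) + p₁ k := by abel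
    rw [hk]
    refine Submodule.add_mem_sup ⟨hsub k, ?_⟩ ⟨k, ⟨hkV, hkp⟩, rfl⟩
    exact Submodule.sub_mem _ hkV hkp
  refine ⟨Submodule.map p₁ K ⊔ K', ?_, ?_⟩
  · apply eq_bot_iff.mpr
    rintro x ⟨hxUV, hxW⟩
    obtain ⟨y, hy, z, hz, rfl⟩ := Submodule.mem_sup.mp hxW
    have hyK : y ∈ K := hmapK hy
    have hzK : z ∈ K := by
      have : (y + z) - y ∈ K := Submodule.sub_mem _ (hUVK hxUV) hyK
      simpa using this
    have hz0 : z = 0 := by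
      have := eq_bot_iff.mp hK1 ⟨hzK, hz⟩
      simpa using this
    subst hz0
    have : y + 0 ∈ (U ⊓ V) ⊓ Submodule.map p₁ K := ⟨hxUV, by simpa using hy⟩
    simpa using eq_bot_iff.mp hdisj this
  · rw [← sup_assoc, hsum, hK2]

/-- Given complementary `U, U₁`, the projection onto `U₁` along `U` (as endo of `M`),
with its key properties. -/
lemma proj_props (U U₁ : Submodule S M) (hc : IsCompl U U₁) :
    ∃ p₁ : M →ₗ[S] M, (∀ x, p₁ (p₁ x) = p₁ x) ∧ (∀ x, p₁ x = 0 ↔ x ∈ U) ∧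
      (∀ x, x - p₁ x ∈ U) ∧ (∀ x, p₁ x ∈ U₁) := by
  refine ⟨U₁.subtype ∘ₗ U₁.projectionOnto U hc.symm, ?_, ?_, ?_, ?_⟩
  · intro x; simp
  · intro x; simp
  · intro x
    have h := Submodule.projection_add_projection_eq_self hc.symm x
    have : x - (U₁.subtype ∘ₗ U₁.projectionOnto U hc.symm) x
        = ↑(U.projectionOnto U₁ hc.symm.symm x) := by
      exact (Submodule.projection_eq_self_sub_projection hc.symm x).symm
    rw [this]; exact Submodule.coe_mem _
  · intro x; exact Submodule.coe_mem _

end AuxSIP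


section MainSIP

variable {S : Type u} [Ring S] {M : Type v} [AddCommGroup M] [Module S M]

lemma sip_dir12 (hSIP : HasSIP S M) :
    ∀ A : Submodule S M, IsDirectSummand A →
      ∀ f : A →ₗ[S] M, (∃ g : M →ₗ[S] A, g ∘ₗ f = LinearMap.id) →
        IsDirectSummand (A ⊓ LinearMap.range f) := by
  intro A hA f ⟨g, hgf⟩
  have hgfx : ∀ y : A, g (f y) = y := fun y => by
    have := LinearMap.ext_iff.mp hgf y
    simpa using this
  set e : M →ₗ[S] M := f ∘ₗ g with he
  have hidem : ∀ x, e (e x) = e x := fun x => by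
    simp only [he, LinearMap.comp_apply]
    rw [hgfx (g x)]
  have hrange : LinearMap.range e = LinearMap.range f := by
    apply le_antisymm
    · rintro _ ⟨x, rfl⟩; exact ⟨g x, rfl⟩
    · rintro _ ⟨a, rfl⟩
      exact ⟨f a, by simp only [he, LinearMap.comp_apply]; rw [hgfx a]⟩
  obtain ⟨h1, h2⟩ := idem_compl hidem
  rw [hrange] at h1 h2
  exact hSIP A (LinearMap.range f) hA ⟨LinearMap.ker e, h1, h2⟩

lemma sip_dir13 (hSIP : HasSIP S M) :
    ∀ A : Submodule S M, IsDirectSummand A →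
      ∀ f : M →ₗ[S] M ⧸ A, (∃ g : M ⧸ A →ₗ[S] M, f ∘ₗ g = LinearMap.id) →
        IsDirectSummand (A ⊓ LinearMap.ker f) := by
  intro A hA f ⟨g, hfg⟩
  have hfgx : ∀ y : M ⧸ A, f (g y) = y := fun y => by
    have := LinearMap.ext_iff.mp hfg y
    simpa using this
  set e : M →ₗ[S] M := g ∘ₗ f with he
  have hidem : ∀ x, e (e x) = e x := fun x => by
    simp only [he, LinearMap.comp_apply]
    rw [hfgx (f x)]
  have hker : LinearMap.ker e = LinearMap.ker f := by
    ext x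
    simp only [LinearMap.mem_ker, he, LinearMap.comp_apply]
    constructor
    · intro h
      have : f (g (f x)) = f 0 := congrArg f h
      rw [hfgx (f x)] at this
      simpa using this
    · intro h; rw [h]; simp
  obtain ⟨h1, h2⟩ := idem_compl hidem
  rw [hker] at h1 h2
  exact hSIP A (LinearMap.ker f) hA
    ⟨LinearMap.range e, by rw [inf_comm]; exact h1, by rw [sup_comm]; exact h2⟩

lemma sip_dir21
    (h2 : ∀ A : Submodule S M, IsDirectSummand A →
      ∀ f : A →ₗ[S] M, (∃ g : M →ₗ[S] A, g ∘ₗ f = LinearMap.id) →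
        IsDirectSummand (A ⊓ LinearMap.range f)) :
    HasSIP S M := by
  intro U V hU hV
  obtain ⟨U₁, hU1, hU2⟩ := hU
  have hcU : IsCompl U U₁ := ⟨disjoint_iff.mpr hU1, codisjoint_iff.mpr hU2⟩
  obtain ⟨V₁, hV1, hV2⟩ := hV
  have hcV : IsCompl V V₁ := ⟨disjoint_iff.mpr hV1, codisjoint_iff.mpr hV2⟩
  obtain ⟨p₁, hidem, hker, hsub, -⟩ := proj_props U U₁ hcU
  -- the split monomorphism `v ↦ v + h₀ v`
  set h₀ : V →ₗ[S] V₁ := (V₁.projectionOnto V hcV.symm) ∘ₗ p₁ ∘ₗ V.subtype with hh₀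
  set f : V →ₗ[S] M := V.subtype + V₁.subtype ∘ₗ h₀ with hf
  have hsplit : ∃ g : M →ₗ[S] V, g ∘ₗ f = LinearMap.id := by
    refine ⟨V.projectionOnto V₁ hcV, ?_⟩
    ext v
    simp [hf]
  have hKs : IsDirectSummand (V ⊓ LinearMap.range f) :=
    h2 V ⟨V₁, hV1, hV2⟩ f hsplit
  have heq : V ⊓ LinearMap.range f = V ⊓ Submodule.comap p₁ V := by
    ext x
    constructor
    · rintro ⟨hxV, v, rfl⟩
      have hfv : f v = ↑v + ↑(h₀ v) := rfl
      have hmem : (↑(h₀ v) : M) ∈ V := by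
        have : f v - ↑v ∈ V := Submodule.sub_mem _ hxV v.2
        rwa [hfv, add_sub_cancel_left] at this
      have hz : (h₀ v : M) = 0 := by
        have : (↑(h₀ v) : M) ∈ V ⊓ V₁ := ⟨hmem, (h₀ v).2⟩
        rw [hV1] at this; simpa using this
      have hz' : h₀ v = 0 := by exact_mod_cast hz
      have hpv : p₁ ↑v ∈ V := by
        have := hz'
        rw [hh₀] at this
        simpa using (Submodule.linearProjOfIsCompl_apply_eq_zero_iff hcV.symm).mp
          (by simpa using this)
      have hx : f v = ↑v := by rw [hfv, hz, add_zero]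
      exact ⟨hxV, by rw [hx]; exact hpv⟩
    · rintro ⟨hxV, hxp⟩
      refine ⟨hxV, ⟨⟨x, hxV⟩, ?_⟩⟩
      have hz : h₀ ⟨x, hxV⟩ = 0 := by
        rw [hh₀]
        simp only [LinearMap.comp_apply, Submodule.subtype_apply]
        exact (Submodule.linearProjOfIsCompl_apply_eq_zero_iff hcV.symm).mpr hxp
      show (↑(⟨x, hxV⟩ : V) : M) + ↑(h₀ ⟨x, hxV⟩) = x
      rw [hz]; simp
  rw [heq] at hKs
  exact key_lemma U V p₁ hidem hker hsub hKs

lemma sip_dir31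
    (h3 : ∀ A : Submodule S M, IsDirectSummand A →
      ∀ f : M →ₗ[S] M ⧸ A, (∃ g : M ⧸ A →ₗ[S] M, f ∘ₗ g = LinearMap.id) →
        IsDirectSummand (A ⊓ LinearMap.ker f)) :
    HasSIP S M := by
  intro U V hU hV
  obtain ⟨U₁, hU1, hU2⟩ := hU
  have hcU : IsCompl U U₁ := ⟨disjoint_iff.mpr hU1, codisjoint_iff.mpr hU2⟩
  obtain ⟨V₁, hV1, hV2⟩ := hV
  have hcV : IsCompl V V₁ := ⟨disjoint_iff.mpr hV1, codisjoint_iff.mpr hV2⟩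
  obtain ⟨p₁, hidem, hker, hsub, -⟩ := proj_props U U₁ hcU
  set h₀ : V →ₗ[S] V₁ := (V₁.projectionOnto V hcV.symm) ∘ₗ p₁ ∘ₗ V.subtype with hh₀
  set tq : M →ₗ[S] M := V₁.subtype ∘ₗ h₀ ∘ₗ V.projectionOnto V₁ hcV with htq
  set f : M →ₗ[S] M ⧸ V := V.mkQ ∘ₗ (LinearMap.id - tq) with hf
  have hsplit : ∃ g : M ⧸ V →ₗ[S] M, f ∘ₗ g = LinearMap.id := by
    refine ⟨V₁.subtype ∘ₗ (Submodule.quotientEquivOfIsCompl V V₁ hcV : (M ⧸ V) →ₗ[S] V₁), ?_⟩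
    apply LinearMap.ext; intro x
    set w := Submodule.quotientEquivOfIsCompl V V₁ hcV x with hw
    have h1 : tq ↑w = 0 := by
      rw [htq]
      simp
    show V.mkQ (↑w - tq ↑w) = x
    rw [h1, sub_zero]
    exact Submodule.mk_quotientEquivOfIsCompl_apply (p := V) (q := V₁) hcV x
  have hKs : IsDirectSummand (V ⊓ LinearMap.ker f) :=
    h3 V ⟨V₁, hV1, hV2⟩ f hsplit
  have heq : V ⊓ LinearMap.ker f = V ⊓ Submodule.comap p₁ V := by
    ext x
    constructor
    · rintro ⟨hxV, hxk⟩
      have hxk' : V.mkQ (x - tq x) = 0 := hxk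
      have hmem : x - tq x ∈ V := by
        rwa [Submodule.mkQ_apply, Submodule.Quotient.mk_eq_zero] at hxk'
      have hh : tq x ∈ V := by
        have := Submodule.sub_mem V hxV hmem
        simpa using this
      have hh1 : tq x ∈ V₁ := by rw [htq]; exact Submodule.coe_mem _
      have hz : tq x = 0 := by
        have : tq x ∈ V ⊓ V₁ := ⟨hh, hh1⟩
        rw [hV1] at this; simpa using this
      have hproj : V.projectionOnto V₁ hcV x = ⟨x, hxV⟩ :=
        Submodule.linearProjOfIsCompl_apply_left hcV ⟨x, hxV⟩
      have hz' : h₀ ⟨x, hxV⟩ = 0 := by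
        have : (↑(h₀ (V.projectionOnto V₁ hcV x)) : M) = 0 := hz
        rw [hproj] at this
        exact_mod_cast this
      have hpv : p₁ x ∈ V := by
        rw [hh₀] at hz'
        exact (Submodule.linearProjOfIsCompl_apply_eq_zero_iff hcV.symm).mp
          (by simpa using hz')
      exact ⟨hxV, hpv⟩
    · rintro ⟨hxV, hxp⟩
      refine ⟨hxV, ?_⟩
      have hproj : V.projectionOnto V₁ hcV x = ⟨x, hxV⟩ :=
        Submodule.linearProjOfIsCompl_apply_left hcV ⟨x, hxV⟩
      have hz : tq x = 0 := by
        rw [htq]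
        simp only [LinearMap.comp_apply, hproj, Submodule.subtype_apply]
        have : h₀ ⟨x, hxV⟩ = 0 := by
          rw [hh₀]
          simp only [LinearMap.comp_apply, Submodule.subtype_apply]
          exact (Submodule.linearProjOfIsCompl_apply_eq_zero_iff hcV.symm).mpr hxp
        rw [this]; simp
      show f x = 0
      rw [hf]
      simp only [LinearMap.comp_apply, LinearMap.sub_apply, LinearMap.id_apply, hz, sub_zero]
      rw [Submodule.mkQ_apply, Submodule.Quotient.mk_eq_zero]
      exact hxV
  rw [heq] at hKs
  exact key_lemma U V p₁ hidem hker hsub hKs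

end MainSIP


/-- characterizations of SIP modules via split monomorphisms and
split epimorphisms. -/
theorem statement_2 (R : Type u) [Ring R] (M : Type v) [AddCommGroup M] [Module Rᵐᵒᵖ M] :
    List.TFAE [
      HasSIP Rᵐᵒᵖ M,
      ∀ A : Submodule Rᵐᵒᵖ M, IsDirectSummand A →
        ∀ f : A →ₗ[Rᵐᵒᵖ] M, (∃ g : M →ₗ[Rᵐᵒᵖ] A, g ∘ₗ f = LinearMap.id) →
          IsDirectSummand (A ⊓ LinearMap.range f),
      ∀ A : Submodule Rᵐᵒᵖ M, IsDirectSummand A →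
        ∀ f : M →ₗ[Rᵐᵒᵖ] M ⧸ A, (∃ g : M ⧸ A →ₗ[Rᵐᵒᵖ] M, f ∘ₗ g = LinearMap.id) →
          IsDirectSummand (A ⊓ LinearMap.ker f)] := by
  tfae_have 1 → 2 := fun h => sip_dir12 h
  tfae_have 2 → 1 := fun h => sip_dir21 h
  tfae_have 1 → 3 := fun h => sip_dir13 h
  tfae_have 3 → 1 := fun h => sip_dir31 h
  tfae_finish
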